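/- Let r ≥ 1 and m ≥ 1 be integers and let S ⊆ A(r,m) be a pierced subset, i.e., the convex hull of S intersects the line ℝ·1_r. Then for every i ∈ {1,…,r}, S contains at least one point of color i. -/

import Mathlib

/-- The point `a_{i,j,k}` of the construction `A(r,m)` (indices `i,j,k` are 1-based). -/
noncomputable def pt (r m i j k : ℕ) : Fin r → ℝ := fun l =>
  if (l : ℕ) + 1 = i then
    (∑ l' ∈ Finset.Icc (j + 1) r, (m : ℝ) ^ (2 * r - 2 * l' + 3))
      + ((r - j : ℕ) : ℝ) * (m : ℝ) + (k : ℝ)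
  else if j + 1 ≤ (l : ℕ) + 1 then
    -((m : ℝ) ^ (2 * r - 2 * ((l : ℕ) + 1) + 3))
  else 0

/-- The point set `A(r,m) ⊆ ℝ^r`. -/
def Apts (r m : ℕ) : Set (Fin r → ℝ) :=
  {x | ∃ i j k : ℕ, 1 ≤ i ∧ i ≤ j ∧ j ≤ r ∧ 1 ≤ k ∧ k ≤ m ∧ x = pt r m i j k}

/-- The set `C_i` of points of `A(r,m)` of color `i`. -/
def colorSet (r m i : ℕ) : Set (Fin r → ℝ) :=
  {x | ∃ j k : ℕ, 1 ≤ i ∧ i ≤ j ∧ j ≤ r ∧ 1 ≤ k ∧ k ≤ m ∧ x = pt r m i j k}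

/-- The set `L_j` of points of `A(r,m)` of layer `j`. -/
def layerSet (r m j : ℕ) : Set (Fin r → ℝ) :=
  {x | ∃ i k : ℕ, 1 ≤ i ∧ i ≤ j ∧ j ≤ r ∧ 1 ≤ k ∧ k ≤ m ∧ x = pt r m i j k}

/-- A set `S ⊆ ℝ^r` is pierced if its convex hull meets the line `ℝ·1_r`. -/
def Pierced {r : ℕ} (S : Set (Fin r → ℝ)) : Prop :=
  ∃ c : ℝ, (fun _ => c : Fin r → ℝ) ∈ convexHull ℝ S

/-- The `i`-th standard basis vector of `ℝ^r` (1-based index). -/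
def stdVec (r i : ℕ) : Fin r → ℝ := fun l => if (l : ℕ) + 1 = i then 1 else 0


lemma pt_sum (r m i j k : ℕ) (hi : 1 ≤ i) (hij : i ≤ j) (hjr : j ≤ r) :
    ∑ l : Fin r, pt r m i j k l = ((r - j : ℕ) : ℝ) * m + k := by
  have key : ∑ l : Fin r, pt r m i j k l =
      ∑ n ∈ Finset.range r, (if n + 1 = i then
        (∑ l' ∈ Finset.Icc (j + 1) r, (m : ℝ) ^ (2 * r - 2 * l' + 3))
          + ((r - j : ℕ) : ℝ) * m + k
      else if j + 1 ≤ n + 1 then -((m : ℝ) ^ (2 * r - 2 * (n + 1) + 3)) else 0) :=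
    Fin.sum_univ_eq_sum_range (fun n => if n + 1 = i then
        (∑ l' ∈ Finset.Icc (j + 1) r, (m : ℝ) ^ (2 * r - 2 * l' + 3))
          + ((r - j : ℕ) : ℝ) * m + k
      else if j + 1 ≤ n + 1 then -((m : ℝ) ^ (2 * r - 2 * (n + 1) + 3)) else 0) r
  rw [key]
  have hmem : i - 1 ∈ Finset.range r := Finset.mem_range.2 (by omega)
  rw [← Finset.add_sum_erase _ _ hmem]
  rw [if_pos (by omega : (i-1) + 1 = i)]
  have herase : ∑ n ∈ (Finset.range r).erase (i-1), (if n + 1 = i then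
        (∑ l' ∈ Finset.Icc (j + 1) r, (m : ℝ) ^ (2 * r - 2 * l' + 3))
          + ((r - j : ℕ) : ℝ) * m + k
      else if j + 1 ≤ n + 1 then -((m : ℝ) ^ (2 * r - 2 * (n + 1) + 3)) else 0)
      = ∑ n ∈ Finset.range r, (if j + 1 ≤ n + 1 then -((m : ℝ) ^ (2 * r - 2 * (n + 1) + 3)) else 0) := by
    rw [Finset.sum_congr rfl (fun n hn => ?_)]
    · exact Finset.sum_erase _ (by rw [if_neg (by omega)])
    · rw [if_neg (by have := Finset.ne_of_mem_erase hn; omega)]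
  rw [herase]
  have hsplit : ∑ n ∈ Finset.range r, (if j + 1 ≤ n + 1 then -((m : ℝ) ^ (2 * r - 2 * (n + 1) + 3)) else 0)
      = - ∑ n ∈ Finset.range (r - j), (m : ℝ) ^ (2 * r - 2 * (j + n + 1) + 3) := by
    rw [Finset.range_eq_Ico, ← Finset.sum_Ico_consecutive _ (Nat.zero_le j) hjr]
    have hA : ∑ n ∈ Finset.Ico 0 j, (if j + 1 ≤ n + 1 then -((m : ℝ) ^ (2 * r - 2 * (n + 1) + 3)) else 0) = 0 :=
      Finset.sum_eq_zero (fun n hn => if_neg (by simp [Finset.mem_Ico] at hn; omega))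
    have hB : ∑ n ∈ Finset.Ico j r, (if j + 1 ≤ n + 1 then -((m : ℝ) ^ (2 * r - 2 * (n + 1) + 3)) else 0)
        = ∑ n ∈ Finset.Ico j r, -((m : ℝ) ^ (2 * r - 2 * (n + 1) + 3)) :=
      Finset.sum_congr rfl (fun n hn => if_pos (by simp [Finset.mem_Ico] at hn; omega))
    rw [hA, hB, zero_add, Finset.sum_Ico_eq_sum_range, ← Finset.sum_neg_distrib]
  rw [hsplit]
  have hIcc : ∑ l' ∈ Finset.Icc (j + 1) r, (m : ℝ) ^ (2 * r - 2 * l' + 3)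
      = ∑ n ∈ Finset.range (r - j), (m : ℝ) ^ (2 * r - 2 * (j + n + 1) + 3) := by
    rw [← Finset.Ico_add_one_right_eq_Icc, Finset.sum_Ico_eq_sum_range]
    apply Finset.sum_congr (by congr 1; omega)
    intro n hn
    congr 1
    omega
  rw [hIcc]
  ring

/-- every pierced subset of `A(r,m)` contains a point of each color. -/
theorem pierced_subset_contains_all_colors
    (r m : ℕ) (hr : 1 ≤ r) (hm : 1 ≤ m)
    (S : Set (Fin r → ℝ)) (hSA : S ⊆ Apts r m) (hS : Pierced S) :
    ∀ i : ℕ, 1 ≤ i → i ≤ r → ∃ x ∈ S, x ∈ colorSet r m i := by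
  intro i hi1 hir
  by_contra hcon
  push_neg at hcon
  obtain ⟨c, hc⟩ := hS
  have hle : c ≤ 0 := by
    have hsub : convexHull ℝ S ⊆ {x : Fin r → ℝ | x ⟨i - 1, by omega⟩ ≤ 0} := by
      apply convexHull_min _ (convex_halfSpace_le ⟨fun a b => rfl, fun a x => rfl⟩ 0)
      intro x hx
      obtain ⟨i', j, k, hi', hij, hjr, hk1, hkm, hxeq⟩ := hSA hx
      have hne : i' ≠ i := by
        rintro rfl
        exact hcon x hx ⟨j, k, hi', hij, hjr, hk1, hkm, hxeq⟩
      subst hxeq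
      show pt r m i' j k ⟨i - 1, by omega⟩ ≤ 0
      simp only [pt]
      rw [if_neg (show ¬((⟨i - 1, by omega⟩ : Fin r) : ℕ) + 1 = i' by simp only [Fin.val_mk]; omega)]
      split_ifs with h
      · exact neg_nonpos.2 (by positivity)
      · exact le_refl 0
    simpa using hsub hc
  have hge : (1 : ℝ) ≤ ∑ l : Fin r, (fun _ => c : Fin r → ℝ) l := by
    have hlin : IsLinearMap ℝ (fun x : Fin r → ℝ => ∑ l, x l) :=
      ⟨fun a b => Finset.sum_add_distrib, fun a x => by simp [Finset.mul_sum]⟩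
    have hsub : convexHull ℝ S ⊆ {x : Fin r → ℝ | 1 ≤ ∑ l, x l} := by
      apply convexHull_min _ (convex_halfSpace_ge hlin 1)
      intro x hx
      obtain ⟨i', j, k, hi', hij, hjr, hk1, hkm, hxeq⟩ := hSA hx
      subst hxeq
      show (1 : ℝ) ≤ ∑ l, pt r m i' j k l
      rw [pt_sum r m i' j k hi' hij hjr]
      have h1 : (1 : ℝ) ≤ (k : ℝ) := by exact_mod_cast hk1
      have h2 : (0 : ℝ) ≤ ((r - j : ℕ) : ℝ) * (m : ℝ) := by positivity
      linarith
    exact hsub hc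
  simp only [Finset.sum_const, Finset.card_univ, Fintype.card_fin, nsmul_eq_mul] at hge
  have hr0 : (0 : ℝ) ≤ (r : ℝ) := Nat.cast_nonneg r
  nlinarith
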